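/- Let A be a finite dimensional DGA with Jacobson radical J. The inclusion of chain complexes J_- → J_+ (where J_- = {r ∈ J | d(r) ∈ J} and J_+ = J + d(J)) is a quasi-isomorphism, i.e., it induces an isomorphism on all cohomology groups. -/

import Mathlib

/-!
STATEMENT 4: For a finite dimensional DGA `A` with Jacobson radical `J`, the inclusion of
chain complexes `J₋ → J₊` (where `J₋ = {r ∈ J | d r ∈ J}` and `J₊ = J + d(J)`) is a
quasi-isomorphism: it induces an isomorphism on all cohomology groups.  Concretely, in each
degree `n` the induced map on degree-`n` cocycles modulo coboundaries is surjective and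
injective.
-/

section Aux
variable {k A : Type*} [Field k] [Ring A] [Algebra k A]

private lemma left_inv_one_sub {J : TwoSidedIdeal A} (hJ : J = (⊥ : TwoSidedIdeal A).jacobson)
    {x : A} (hx : x ∈ J) : ∃ z : A, z * (1 - x) = 1 := by
  rw [hJ] at hx
  obtain ⟨z, hz⟩ := TwoSidedIdeal.mem_jacobson_iff.mp hx (-1)
  rw [TwoSidedIdeal.mem_bot] at hz
  refine ⟨z, sub_eq_zero.mp ?_⟩
  calc z * (1 - x) - 1 = z * -1 * x + z - 1 := by noncomm_ring
    _ = 0 := hz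

private lemma unit_one_sub {J : TwoSidedIdeal A} (hJ : J = (⊥ : TwoSidedIdeal A).jacobson)
    {x : A} (hx : x ∈ J) : ∃ z : A, z * (1 - x) = 1 ∧ (1 - x) * z = 1 := by
  obtain ⟨z, hz⟩ := left_inv_one_sub hJ hx
  have hzx : -(z * x) ∈ J := J.neg_mem (J.mul_mem_left z x hx)
  obtain ⟨w, hw⟩ := left_inv_one_sub hJ hzx
  have hz' : z - z * x = 1 := by rw [← hz]; noncomm_ring
  have hzz : 1 - -(z * x) = z := by
    rw [sub_neg_eq_add]
    exact (sub_eq_iff_eq_add.mp hz').symm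
  rw [hzz] at hw
  have hw2 : w = 1 - x := by
    calc w = w * (z * (1 - x)) := by rw [hz, mul_one]
      _ = (w * z) * (1 - x) := (mul_assoc _ _ _).symm
      _ = 1 - x := by rw [hw, one_mul]
  exact ⟨z, hz, by rw [← hw2]; exact hw⟩

private lemma nakayama {J : TwoSidedIdeal A} (hJ : J = (⊥ : TwoSidedIdeal A).jacobson) :
    ∀ (N : ℕ) (s : Finset A), s.card ≤ N →
      (∀ x ∈ s, ∃ c : A → A, (∀ i, c i ∈ J) ∧ x = ∑ i ∈ s, c i * i) →
      ∀ x ∈ s, x = 0 := by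
  classical
  intro N
  induction N with
  | zero =>
    intro s hs _ x hx
    rw [Nat.le_zero, Finset.card_eq_zero] at hs
    subst hs; simp at hx
  | succ N ih =>
    intro s hs h x hx
    obtain ⟨c, hc, hm⟩ := h x hx
    set s' := s.erase x with hs'
    have hsum : x = c x * x + ∑ i ∈ s', c i * i := by
      conv_lhs => rw [hm]
      exact (Finset.add_sum_erase s (fun i => c i * i) hx).symm
    have h1 : (1 - c x) * x = ∑ i ∈ s', c i * i := by
      rw [sub_mul, one_mul]
      exact sub_eq_iff_eq_add'.mpr hsum
    obtain ⟨z, hz, hz'⟩ := unit_one_sub hJ (hc x)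
    have hx_repr : x = ∑ i ∈ s', (z * c i) * i := by
      calc x = 1 * x := (one_mul x).symm
        _ = (z * (1 - c x)) * x := by rw [hz]
        _ = z * ((1 - c x) * x) := mul_assoc _ _ _
        _ = z * ∑ i ∈ s', c i * i := by rw [h1]
        _ = ∑ i ∈ s', z * (c i * i) := Finset.mul_sum _ _ _
        _ = ∑ i ∈ s', (z * c i) * i := by simp [mul_assoc]
    have h' : ∀ u ∈ s', ∃ c' : A → A, (∀ i, c' i ∈ J) ∧ u = ∑ i ∈ s', c' i * i := by
      intro u hu
      obtain ⟨c2, hc2, hu2⟩ := h u (Finset.mem_of_mem_erase hu)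
      refine ⟨fun i => c2 x * (z * c i) + c2 i,
        fun i => J.add_mem (J.mul_mem_left _ _ (J.mul_mem_left _ _ (hc i))) (hc2 i), ?_⟩
      calc u = c2 x * x + ∑ i ∈ s', c2 i * i := by
            conv_lhs => rw [hu2]
            exact (Finset.add_sum_erase s (fun i => c2 i * i) hx).symm
        _ = c2 x * (∑ i ∈ s', (z * c i) * i) + ∑ i ∈ s', c2 i * i := by rw [← hx_repr]
        _ = (∑ i ∈ s', (c2 x * (z * c i)) * i) + ∑ i ∈ s', c2 i * i := by
            rw [Finset.mul_sum]
            congr 1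
            exact Finset.sum_congr rfl fun i _ => by rw [← mul_assoc]
        _ = ∑ i ∈ s', (c2 x * (z * c i) + c2 i) * i := by
            rw [← Finset.sum_add_distrib]
            exact Finset.sum_congr rfl fun i _ => (add_mul _ _ _).symm
    have hall : ∀ u ∈ s', u = 0 := by
      refine ih s' ?_ h'
      rw [hs', Finset.card_erase_of_mem hx]
      omega
    rw [hx_repr]
    exact Finset.sum_eq_zero fun i hi => by rw [hall i hi, mul_zero]


private lemma jpow_eq_bot [FiniteDimensional k A] {J : TwoSidedIdeal A}
    (hJ : J = (⊥ : TwoSidedIdeal A).jacobson) :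
    ∃ p : ℕ, (((TwoSidedIdeal.asIdeal J).restrictScalars k : Submodule k A) ^ (p + 1)) = ⊥ := by
  classical
  set Q : Submodule k A := (TwoSidedIdeal.asIdeal J).restrictScalars k with hQdef
  have hmemQ : ∀ x : A, x ∈ Q ↔ x ∈ J := fun x => by
    simp [hQdef, TwoSidedIdeal.mem_asIdeal]
  have hQQ : Q * Q ≤ Q := Submodule.mul_le.mpr fun a _ b hb =>
    (hmemQ _).mpr (J.mul_mem_left _ _ ((hmemQ _).mp hb))
  have hanti : ∀ n : ℕ, Q ^ (n + 2) ≤ Q ^ (n + 1) := by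
    intro n
    calc Q ^ (n + 2) = Q ^ n * (Q * Q) := by rw [pow_succ, pow_succ, mul_assoc]
      _ ≤ Q ^ n * Q := mul_le_mul' le_rfl hQQ
      _ = Q ^ (n + 1) := (pow_succ Q n).symm
  set f : ℕ → ℕ := fun n => Module.finrank k (Q ^ (n + 1) : Submodule k A) with hf
  obtain ⟨_, ⟨n, rfl⟩, hmin⟩ := Nat.lt_wfRel.wf.has_min (Set.range f) ⟨f 0, 0, rfl⟩
  have hle : f n ≤ f (n + 1) := Nat.not_lt.mp (hmin (f (n + 1)) ⟨n + 1, rfl⟩)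
  have hstab : Q ^ (n + 2) = Q ^ (n + 1) := Submodule.eq_of_le_of_finrank_le (hanti n) hle
  refine ⟨n, ?_⟩
  -- P := Q^(n+1), Q * P = P
  set P : Submodule k A := Q ^ (n + 1) with hP
  have hQP : Q * P = P := by
    rw [hP, ← pow_succ']
    exact hstab
  obtain ⟨s, hs⟩ : ∃ s : Finset A, Submodule.span k (↑s : Set A) = P :=
    (IsNoetherian.noetherian P)
  -- membership representation
  have hT : ∀ x ∈ s, ∃ c : A → A, (∀ i, c i ∈ J) ∧ x = ∑ i ∈ s, c i * i := by
    intro x hx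
    have hxP : x ∈ Q * P := by
      rw [hQP, ← hs]; exact Submodule.subset_span hx
    -- T submodule
    let T : Submodule k A :=
      { carrier := {x | ∃ c : A → A, (∀ i, c i ∈ J) ∧ x = ∑ i ∈ s, c i * i}
        zero_mem' := ⟨fun _ => 0, fun _ => J.zero_mem, by simp⟩
        add_mem' := by
          rintro a b ⟨c1, hc1, rfl⟩ ⟨c2, hc2, rfl⟩
          exact ⟨fun i => c1 i + c2 i, fun i => J.add_mem (hc1 i) (hc2 i), by
            rw [← Finset.sum_add_distrib]
            exact Finset.sum_congr rfl fun i _ => (add_mul _ _ _).symm⟩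
        smul_mem' := by
          rintro r a ⟨c1, hc1, rfl⟩
          refine ⟨fun i => r • c1 i, fun i => ?_, ?_⟩
          · show r • c1 i ∈ J
            rw [Algebra.smul_def]
            exact J.mul_mem_left _ _ (hc1 i)
          · rw [Finset.smul_sum]
            exact Finset.sum_congr rfl fun i _ => (smul_mul_assoc _ _ _).symm }
    have hQPle : Q * P ≤ T := by
      refine Submodule.mul_le.mpr fun j hj y hy => ?_
      rw [← hs] at hy
      obtain ⟨g, -, hg⟩ := Submodule.mem_span_finset.mp hy
      refine ⟨fun i => g i • j, fun i => by
        show g i • j ∈ J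
        rw [Algebra.smul_def]; exact J.mul_mem_left _ _ ((hmemQ _).mp hj), ?_⟩
      rw [← hg, Finset.mul_sum]
      exact Finset.sum_congr rfl fun i _ => by
        rw [mul_smul_comm, smul_mul_assoc]
    exact hQPle hxP
  have hz : ∀ x ∈ s, x = 0 := nakayama hJ s.card s le_rfl hT
  have : P = ⊥ := by
    rw [← hs, eq_bot_iff, Submodule.span_le]
    intro x hx
    rw [SetLike.mem_coe, Submodule.mem_bot]
    exact hz x hx
  exact this

end Aux

section Aux3
variable {k A : Type*} [Field k] [Ring A] [Algebra k A]
variable (𝒜 : ℤ → Submodule k A) [GradedAlgebra 𝒜]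

/-- The degree-`D` component, as an additive monoid hom. -/
private noncomputable def compHom (D : ℤ) : A →+ A where
  toFun a := (DirectSum.decompose 𝒜 a D : A)
  map_zero' := by simp
  map_add' a b := by simp

private lemma compHom_apply (D : ℤ) (a : A) :
    compHom 𝒜 D a = (DirectSum.decompose 𝒜 a D : A) := rfl

private lemma comp_mul_low (x y : A) (c e : ℤ)
    (hx : ∀ i < c, (DirectSum.decompose 𝒜 x i : A) = 0)
    (hy : ∀ j < e, (DirectSum.decompose 𝒜 y j : A) = 0) :
    (∀ D < c + e, (DirectSum.decompose 𝒜 (x * y) D : A) = 0) ∧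
      (DirectSum.decompose 𝒜 (x * y) (c + e) : A) =
        (DirectSum.decompose 𝒜 x c : A) * (DirectSum.decompose 𝒜 y e : A) := by
  classical
  have hxs := DirectSum.sum_support_decompose 𝒜 x
  have hys := DirectSum.sum_support_decompose 𝒜 y
  set sx := (DirectSum.decompose 𝒜 x).support with hsxdef
  set sy := (DirectSum.decompose 𝒜 y).support with hsydef
  have hsx : ∀ i ∈ sx, c ≤ i := by
    intro i hi
    by_contra h
    exact DFinsupp.mem_support_iff.mp hi
      (Subtype.ext (by simpa using hx i (lt_of_not_ge h)))
  have hsy : ∀ j ∈ sy, e ≤ j := by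
    intro j hj
    by_contra h
    exact DFinsupp.mem_support_iff.mp hj
      (Subtype.ext (by simpa using hy j (lt_of_not_ge h)))
  have key : ∀ D : ℤ, (DirectSum.decompose 𝒜 (x * y) D : A) =
      ∑ i ∈ sx, ∑ j ∈ sy,
        (if i + j = D then
          (DirectSum.decompose 𝒜 x i : A) * (DirectSum.decompose 𝒜 y j : A) else 0) := by
    intro D
    conv_lhs => rw [← hxs, ← hys]
    rw [Finset.sum_mul_sum, ← compHom_apply, map_sum]
    refine Finset.sum_congr rfl fun i _ => ?_
    rw [map_sum]
    refine Finset.sum_congr rfl fun j _ => ?_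
    rw [compHom_apply]
    by_cases hij : i + j = D
    · rw [if_pos hij, ← hij]
      exact DirectSum.decompose_of_mem_same 𝒜
        (SetLike.mul_mem_graded (SetLike.coe_mem _) (SetLike.coe_mem _))
    · rw [if_neg hij]
      exact DirectSum.decompose_of_mem_ne 𝒜
        (SetLike.mul_mem_graded (SetLike.coe_mem _) (SetLike.coe_mem _)) hij
  constructor
  · intro D hD
    rw [key D]
    refine Finset.sum_eq_zero fun i hi => Finset.sum_eq_zero fun j hj => ?_
    have h1 := hsx i hi
    have h2 := hsy j hj
    rw [if_neg (by omega)]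
  · rw [key (c + e)]
    have inner : ∀ i ∈ sx,
        (∑ j ∈ sy, (if i + j = c + e then
          (DirectSum.decompose 𝒜 x i : A) * (DirectSum.decompose 𝒜 y j : A) else 0)) =
        if i = c then (DirectSum.decompose 𝒜 x c : A) * (DirectSum.decompose 𝒜 y e : A)
          else 0 := by
      intro i hi
      by_cases hic : i = c
      · subst hic
        rw [if_pos rfl]
        have : ∀ j ∈ sy, (if i + j = i + e then
            (DirectSum.decompose 𝒜 x i : A) * (DirectSum.decompose 𝒜 y j : A) else 0) =
            (if j = e then
              (DirectSum.decompose 𝒜 x i : A) * (DirectSum.decompose 𝒜 y j : A) else 0) := by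
          intro j _
          congr 1
          simp [add_right_inj]
        rw [Finset.sum_congr rfl this, Finset.sum_ite_eq' sy e
          (fun j => (DirectSum.decompose 𝒜 x i : A) * (DirectSum.decompose 𝒜 y j : A))]
        by_cases hey : e ∈ sy
        · rw [if_pos hey]
        · rw [if_neg hey]
          have h0 : DirectSum.decompose 𝒜 y e = 0 := DFinsupp.notMem_support_iff.mp hey
          rw [h0, ZeroMemClass.coe_zero, mul_zero]
      · rw [if_neg hic]
        refine Finset.sum_eq_zero fun j hj => ?_
        have h1 := hsx i hi
        have h2 := hsy j hj
        rw [if_neg (by omega)]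
    rw [Finset.sum_congr rfl inner, Finset.sum_ite_eq' sx c
      (fun _ => (DirectSum.decompose 𝒜 x c : A) * (DirectSum.decompose 𝒜 y e : A))]
    by_cases hcx : c ∈ sx
    · rw [if_pos hcx]
    · rw [if_neg hcx]
      have h0 : DirectSum.decompose 𝒜 x c = 0 := DFinsupp.notMem_support_iff.mp hcx
      rw [h0, ZeroMemClass.coe_zero, zero_mul]

private lemma decompose_d (d : A →ₗ[k] A)
    (hdeg : ∀ (n : ℤ), ∀ a ∈ 𝒜 n, d a ∈ 𝒜 (n + 1)) (a : A) (n : ℤ) :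
    (DirectSum.decompose 𝒜 (d a) (n + 1) : A) = d (DirectSum.decompose 𝒜 a n : A) := by
  classical
  set s := insert n (DirectSum.decompose 𝒜 a).support with hsdef
  have ha : ∑ i ∈ s, (DirectSum.decompose 𝒜 a i : A) = a := by
    rw [hsdef]
    rcases Finset.decidableMem n (DirectSum.decompose 𝒜 a).support with h | h
    · rw [Finset.sum_insert h]
      have hn : DirectSum.decompose 𝒜 a n = 0 := DFinsupp.notMem_support_iff.mp h
      rw [hn, ZeroMemClass.coe_zero, zero_add]
      exact DirectSum.sum_support_decompose 𝒜 a
    · rw [Finset.insert_eq_self.mpr h]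
      exact DirectSum.sum_support_decompose 𝒜 a
  conv_lhs => rw [← ha]
  rw [map_sum, ← compHom_apply, map_sum]
  rw [Finset.sum_eq_single_of_mem n (by simp [hsdef])]
  · rw [compHom_apply]
    exact DirectSum.decompose_of_mem_same 𝒜 (hdeg n _ (SetLike.coe_mem _))
  · intro i _ hin
    rw [compHom_apply]
    exact DirectSum.decompose_of_mem_ne 𝒜 (hdeg i _ (SetLike.coe_mem _))
      (by omega)

private lemma component_mem_jacobson [FiniteDimensional k A]
    {J : TwoSidedIdeal A} (hJ : J = (⊥ : TwoSidedIdeal A).jacobson) :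
    ∀ a ∈ J, ∀ i : ℤ, (DirectSum.decompose 𝒜 a i : A) ∈ J := by
  classical
  obtain ⟨p, hp⟩ := jpow_eq_bot (k := k) hJ
  set Q : Submodule k A := (TwoSidedIdeal.asIdeal J).restrictScalars k with hQdef
  have hmemQ : ∀ x : A, x ∈ Q ↔ x ∈ J := fun x => by
    simp [hQdef, TwoSidedIdeal.mem_asIdeal]
  -- right absorption for powers of Q
  have habs : ∀ (N : ℕ) (w u : A), w ∈ (Q ^ (N + 1) : Submodule k A) →
      w * u ∈ (Q ^ (N + 1) : Submodule k A) := by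
    intro N w u hw
    have h1 : (Q ^ (N + 1) : Submodule k A) * ⊤ ≤ Q ^ (N + 1) := by
      calc (Q ^ (N + 1) : Submodule k A) * ⊤ = Q ^ N * (Q * ⊤) := by
            rw [pow_succ, mul_assoc]
        _ ≤ Q ^ N * Q := mul_le_mul' le_rfl (Submodule.mul_le.mpr
            fun a ha b _ => (hmemQ _).mpr (J.mul_mem_right _ _ ((hmemQ _).mp ha)))
        _ = Q ^ (N + 1) := (pow_succ Q N).symm
    exact h1 (Submodule.mul_mem_mul hw Submodule.mem_top)
  suffices H : ∀ (N : ℕ) (a : A), a ∈ J → (DirectSum.decompose 𝒜 a).support.card ≤ N →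
      ∀ i : ℤ, (DirectSum.decompose 𝒜 a i : A) ∈ J by
    intro a ha i
    exact H _ a ha le_rfl i
  intro N
  induction N with
  | zero =>
    intro a _ hcard i
    rw [Nat.le_zero, Finset.card_eq_zero] at hcard
    have : DirectSum.decompose 𝒜 a i = 0 :=
      DFinsupp.notMem_support_iff.mp (by rw [hcard]; exact Finset.notMem_empty i)
    rw [this, ZeroMemClass.coe_zero]
    exact J.zero_mem
  | succ N ih =>
    intro a ha hcard i
    by_cases hs0 : (DirectSum.decompose 𝒜 a).support = ∅
    · have : DirectSum.decompose 𝒜 a i = 0 :=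
        DFinsupp.notMem_support_iff.mp (by rw [hs0]; exact Finset.notMem_empty i)
      rw [this, ZeroMemClass.coe_zero]
      exact J.zero_mem
    · have hne : (DirectSum.decompose 𝒜 a).support.Nonempty :=
        Finset.nonempty_of_ne_empty hs0
      set n₀ := (DirectSum.decompose 𝒜 a).support.min' hne with hn₀
      have hlow : ∀ j < n₀, (DirectSum.decompose 𝒜 a j : A) = 0 := by
        intro j hj
        have : j ∉ (DirectSum.decompose 𝒜 a).support := fun hmem =>
          absurd (Finset.min'_le _ j hmem) (by omega)
        rw [DFinsupp.notMem_support_iff.mp this, ZeroMemClass.coe_zero]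
      set m : A := (DirectSum.decompose 𝒜 a n₀ : A) with hm
      -- The lowest component is in the radical.
      have hmJ : m ∈ J := by
        rw [hJ, TwoSidedIdeal.mem_jacobson_iff]
        intro y
        -- y * m is nilpotent
        have hnil : (y * m) ^ (p + 1) = 0 := by
          set S : ℕ → Submodule k A := fun N => Submodule.span k
            {x | ∃ c : ℤ, ∃ z : A, z ∈ (Q ^ (N + 1) : Submodule k A) ∧
              (∀ i < c, (DirectSum.decompose 𝒜 z i : A) = 0) ∧
              x = (DirectSum.decompose 𝒜 z c : A)} with hS
          have hsplit : ∀ q : ℕ, (m * y) ^ (q + 1) * m = ((m * y) ^ q * m) * (y * m) := by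
            intro q
            rw [pow_succ]
            rw [mul_assoc, mul_assoc, mul_assoc]
          have hEN : ∀ q : ℕ, (m * y) ^ q * m ∈ S q := by
            intro q
            induction q with
            | zero =>
              rw [pow_zero, one_mul]
              refine Submodule.subset_span ⟨n₀, a, ?_, hlow, rfl⟩
              rw [pow_one]
              exact (hmemQ a).mpr ha
            | succ q ihq =>
              rw [hsplit q]
              have hmap : S q ≤ Submodule.comap (LinearMap.mulRight k (y * m)) (S (q + 1)) := by
                rw [hS]
                rw [Submodule.span_le]
                rintro x ⟨c, z, hz, hzlow, rfl⟩
                simp only [Submodule.mem_comap, LinearMap.mulRight_apply, SetLike.mem_coe]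
                have hyrep := DirectSum.sum_support_decompose 𝒜 y
                have hexp : (DirectSum.decompose 𝒜 z c : A) * (y * m) =
                    ∑ g ∈ (DirectSum.decompose 𝒜 y).support,
                      (DirectSum.decompose 𝒜 z c : A) *
                        ((DirectSum.decompose 𝒜 y g : A) * m) := by
                  conv_lhs => rw [← hyrep]
                  rw [Finset.sum_mul, Finset.mul_sum]
                rw [hexp]
                refine Submodule.sum_mem _ fun g _ => ?_
                have h2 := comp_mul_low 𝒜 (DirectSum.decompose 𝒜 y g : A) a g n₀
                  (fun i hig => by
                    rw [DirectSum.decompose_of_mem_ne 𝒜 (SetLike.coe_mem _) (by omega)])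
                  hlow
                have h3 := comp_mul_low 𝒜 z ((DirectSum.decompose 𝒜 y g : A) * a) c (g + n₀)
                  hzlow h2.1
                have he : (DirectSum.decompose 𝒜 z c : A) *
                    ((DirectSum.decompose 𝒜 y g : A) * m) =
                    (DirectSum.decompose 𝒜 (z * ((DirectSum.decompose 𝒜 y g : A) * a))
                      (c + (g + n₀)) : A) := by
                  rw [h3.2, h2.2, DirectSum.decompose_of_mem_same 𝒜 (SetLike.coe_mem _)]
                rw [he]
                refine Submodule.subset_span ⟨c + (g + n₀),
                  z * ((DirectSum.decompose 𝒜 y g : A) * a), ?_, h3.1, rfl⟩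
                rw [← mul_assoc, pow_succ]
                exact Submodule.mul_mem_mul (habs q z _ hz) ((hmemQ a).mpr ha)
              exact hmap ihq
          have hSp : S p ≤ ⊥ := by
            rw [hS, Submodule.span_le]
            rintro x ⟨c, z, hz, _, rfl⟩
            rw [hp] at hz
            rw [Submodule.mem_bot] at hz
            subst hz
            rw [SetLike.mem_coe, Submodule.mem_bot, DirectSum.decompose_zero]
            rfl
          have hE0 : (m * y) ^ p * m = 0 := by
            have := hSp (hEN p)
            rwa [Submodule.mem_bot] at this
          have hy2 : ∀ q : ℕ, (y * m) ^ (q + 1) = y * ((m * y) ^ q * m) := by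
            intro q
            induction q with
            | zero => rw [pow_zero, one_mul, pow_one]
            | succ q ihq =>
              rw [pow_succ, ihq, hsplit q]
              simp only [mul_assoc]
          rw [hy2 p, hE0, mul_zero]
        have hu : IsUnit (1 + y * m) := IsNilpotent.isUnit_one_add ⟨p + 1, hnil⟩
        obtain ⟨u, hu⟩ := hu
        refine ⟨(↑u⁻¹ : A), ?_⟩
        rw [TwoSidedIdeal.mem_bot]
        have hinv : (↑u⁻¹ : A) * (1 + y * m) = 1 := by rw [← hu]; exact u.inv_mul
        calc (↑u⁻¹ : A) * y * m + ↑u⁻¹ - 1 = (↑u⁻¹ : A) * (1 + y * m) - 1 := by noncomm_ring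
          _ = 0 := by rw [hinv, sub_self]
      -- subtract the lowest component and induct
      have ha' : a - m ∈ J := by
        rw [sub_eq_add_neg]
        exact J.add_mem ha (J.neg_mem hmJ)
      have hcomp' : ∀ j : ℤ, (DirectSum.decompose 𝒜 (a - m) j : A) =
          if j = n₀ then 0 else (DirectSum.decompose 𝒜 a j : A) := by
        intro j
        have hsub : (DirectSum.decompose 𝒜 (a - m) j : A) =
            (DirectSum.decompose 𝒜 a j : A) - (DirectSum.decompose 𝒜 m j : A) := by
          rw [DirectSum.decompose_sub]
          simp
        by_cases hjn : j = n₀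
        · subst hjn
          rw [if_pos rfl, hsub, DirectSum.decompose_of_mem_same 𝒜 (SetLike.coe_mem _), sub_self]
        · rw [if_neg hjn, hsub,
            DirectSum.decompose_of_mem_ne 𝒜 (SetLike.coe_mem (DirectSum.decompose 𝒜 a n₀))
              (fun h => hjn h.symm), sub_zero]
      have hsupp' : (DirectSum.decompose 𝒜 (a - m)).support ⊆
          (DirectSum.decompose 𝒜 a).support.erase n₀ := by
        intro j hj
        have hjne : (DirectSum.decompose 𝒜 (a - m) j : A) ≠ 0 := fun h =>
          DFinsupp.mem_support_iff.mp hj (Subtype.ext (by simpa using h))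
        rw [Finset.mem_erase]
        by_cases hjn : j = n₀
        · exact absurd (by rw [hcomp' j, if_pos hjn]) hjne
        · refine ⟨hjn, ?_⟩
          rw [DFinsupp.mem_support_iff]
          intro h0
          apply hjne
          rw [hcomp' j, if_neg hjn, h0, ZeroMemClass.coe_zero]
      have hcard' : (DirectSum.decompose 𝒜 (a - m)).support.card ≤ N := by
        have h1 := Finset.card_le_card hsupp'
        have hmem : n₀ ∈ (DirectSum.decompose 𝒜 a).support := by
          rw [hn₀]; exact Finset.min'_mem _ hne
        have h2 := Finset.card_erase_of_mem hmem
        omega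
      have hcomps := ih (a - m) ha' hcard'
      by_cases hin : i = n₀
      · rw [hin]; exact hmJ
      · have := hcomps i
        rw [hcomp' i, if_neg hin] at this
        exact this

end Aux3

theorem internal_to_external_radical_quasi_iso
    {k A : Type*} [Field k] [Ring A] [Algebra k A] [FiniteDimensional k A]
    (𝒜 : ℤ → Submodule k A) [GradedAlgebra 𝒜]
    (d : A →ₗ[k] A)
    (hd2 : ∀ a : A, d (d a) = 0)
    (hdeg : ∀ (n : ℤ), ∀ a ∈ 𝒜 n, d a ∈ 𝒜 (n + 1))
    (hleib : ∀ (n : ℤ), ∀ a ∈ 𝒜 n, ∀ b : A,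
      d (a * b) = d a * b + ((-1 : k) ^ n) • (a * d b))
    (J : TwoSidedIdeal A) (hJ : J = (⊥ : TwoSidedIdeal A).jacobson)
    (Jm : Set A) (hJm : Jm = {r : A | r ∈ J ∧ d r ∈ J})
    (Jp : Set A) (hJp : Jp = {x : A | ∃ a ∈ J, ∃ b ∈ J, x = a + d b}) :
    -- surjectivity on cohomology: every cocycle of `J₊` is, up to a coboundary of `J₊`,
    -- a cocycle of `J₋`
    (∀ n : ℤ, ∀ x ∈ Jp, x ∈ 𝒜 n → d x = 0 →
      ∃ y ∈ Jm, y ∈ 𝒜 n ∧ d y = 0 ∧ ∃ z ∈ Jp, z ∈ 𝒜 (n - 1) ∧ x = y + d z) ∧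
    -- injectivity on cohomology: a cocycle of `J₋` which bounds in `J₊` bounds in `J₋`
    (∀ n : ℤ, ∀ y ∈ Jm, y ∈ 𝒜 n → d y = 0 →
      (∃ z ∈ Jp, d z = y) → ∃ w ∈ Jm, d w = y) := by
  subst hJm hJp
  constructor
  · -- surjectivity
    intro n x hx hxn hdx
    obtain ⟨a, haJ, b, hbJ, hxe⟩ := hx
    subst hxe
    have hda : d a = 0 := by
      have : d (a + d b) = d a + d (d b) := map_add d a (d b)
      rw [hd2 b, add_zero] at this
      rw [← this, hdx]
    set y : A := (DirectSum.decompose 𝒜 a n : A) with hy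
    set z : A := (DirectSum.decompose 𝒜 b (n - 1) : A) with hz
    have hyJ : y ∈ J := component_mem_jacobson 𝒜 hJ a haJ n
    have hzJ : z ∈ J := component_mem_jacobson 𝒜 hJ b hbJ (n - 1)
    have hdy : d y = 0 := by
      rw [hy, ← decompose_d 𝒜 d hdeg a n, hda]
      rw [DirectSum.decompose_zero]
      rfl
    have hdbz : (DirectSum.decompose 𝒜 (d b) n : A) = d z := by
      have := decompose_d 𝒜 d hdeg b (n - 1)
      rwa [show n - 1 + 1 = n by ring] at this
    have hxeq : a + d b = y + d z := by
      have h1 : (DirectSum.decompose 𝒜 (a + d b) n : A) = a + d b :=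
        DirectSum.decompose_of_mem_same 𝒜 hxn
      have h2 : (DirectSum.decompose 𝒜 (a + d b) n : A) = y + d z := by
        rw [DirectSum.decompose_add]
        simp only [DirectSum.add_apply, Submodule.coe_add]
        rw [← hy, hdbz]
      rw [← h1, h2]
    refine ⟨y, ⟨hyJ, by rw [hdy]; exact J.zero_mem⟩, SetLike.coe_mem _, hdy,
      z, ⟨z, hzJ, 0, J.zero_mem, by rw [map_zero, add_zero]⟩, SetLike.coe_mem _, hxeq⟩
  · -- injectivity
    intro n y hy _ _ hex
    obtain ⟨z, hz, hdz⟩ := hex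
    obtain ⟨a, haJ, b, hbJ, hze⟩ := hz
    refine ⟨a, ⟨haJ, ?_⟩, ?_⟩
    · have hda : d a = y := by
        rw [hze] at hdz
        rw [map_add, hd2 b, add_zero] at hdz
        exact hdz
      rw [hda]
      exact hy.1
    · rw [hze] at hdz
      rw [map_add, hd2 b, add_zero] at hdz
      exact hdz
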